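/- Let q be a prime power with q ≡ 1 (mod d), ω a primitive root of F_q, C the index-d subgroup of F_q^*, and let ψ ∈ Sym({0,...,d−1}). Suppose h assigns to each cycle ζ of ψ a positive integer h(ζ) such that d·h(ζ) divides q − 1. Then there exists an index-d first-order cyclotomic permutation f of F_q such that f(ω^i C) = ω^{ψ(i)} C for all i, and for each cycle ζ of ψ, the product π(ζ) = Π_{i ∈ supp(ζ)} a_i of the multiplier constants of f along ζ has multiplicative order (q−1)/(d·h(ζ)). -/

import Mathlib

/-- Given `q ≡ 1 (mod d)`, a primitive root `ω` of `F_q`, a permutation `ψ` of the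
coset indices `{0, …, d-1}` and a function `h` assigning to each cycle of `ψ` a
positive integer with `d·h(ζ) ∣ q - 1`, there exists an index-`d` first-order
cyclotomic permutation `f` of `F_q` inducing `ψ` on the cosets of the index-`d`
subgroup `C` whose cycle products `π(ζ)` have multiplicative order `(q-1)/(d·h(ζ))`. -/
theorem stmt16 {F : Type*} [Field F] [Fintype F] [DecidableEq F]
    (d : ℕ) [NeZero d] (hdvd : d ∣ Fintype.card F - 1)
    (ω : Fˣ) (hω : ∀ x : Fˣ, x ∈ Subgroup.zpowers ω)
    (ψ : Equiv.Perm (ZMod d))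
    (h : ZMod d → ℕ) (hconst : ∀ i j : ZMod d, ψ.SameCycle i j → h i = h j)
    (hpos : ∀ i, 0 < h i) (hdiv : ∀ i, d * h i ∣ Fintype.card F - 1) :
    ∃ (a : ZMod d → Fˣ) (f : F → F),
      f 0 = 0
      ∧ (∀ e : ℤ, f ((ω ^ e : Fˣ) : F) = ((a ((e : ZMod d)) : F)) * ((ω ^ e : Fˣ) : F))
      ∧ Function.Bijective f
      ∧ (∀ e : ℤ, ∃ c : ℤ, f ((ω ^ e : Fˣ) : F) = ((ω ^ c : Fˣ) : F) ∧
          (c : ZMod d) = ψ ((e : ZMod d)))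
      ∧ (∀ i : ZMod d,
          orderOf (∏ j ∈ Finset.univ.filter (fun j => ψ.SameCycle i j), a j)
            = (Fintype.card F - 1) / (d * h i)) := by
  have hord : orderOf ω = Fintype.card F - 1 := by
    rw [orderOf_eq_card_of_forall_mem_zpowers hω, Nat.card_eq_fintype_card, Fintype.card_units]
  set S : ZMod d → Finset (ZMod d) :=
    fun i => Finset.univ.filter (fun j => ψ.SameCycle i j) with hS
  have hmemS : ∀ i j, j ∈ S i ↔ ψ.SameCycle i j := by
    intro i j; simp [hS]
  have hSself : ∀ i, i ∈ S i := fun i => (hmemS i i).2 (Equiv.Perm.SameCycle.refl ψ i)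
  have hSeq : ∀ {i j}, ψ.SameCycle i j → S i = S j := by
    intro i j hij
    ext u
    rw [hmemS, hmemS]
    exact ⟨fun hu => hij.symm.trans hu, fun hu => hij.trans hu⟩
  classical
  -- representative of each cycle
  have hne : ∀ i, ((S i).image ZMod.val).Nonempty :=
    fun i => ⟨(ZMod.val i), Finset.mem_image_of_mem _ (hSself i)⟩
  set r : ZMod d → ZMod d := fun i => ((((S i).image ZMod.val).min' (hne i) : ℕ) : ZMod d)
    with hr
  have hrS : ∀ i, r i ∈ S i := by
    intro i
    obtain ⟨j, hj, hjv⟩ := Finset.mem_image.mp (Finset.min'_mem _ (hne i))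
    have : r i = j := by
      simp only [hr]
      rw [← hjv]
      simp [ZMod.natCast_val, ZMod.cast_id]
    rw [this]; exact hj
  have hrc : ∀ {i j}, ψ.SameCycle i j → r i = r j := by
    intro i j hij; rw [hr]; simp only [hSeq hij]
  have hrr : ∀ i, r (r i) = r i := by
    intro i
    exact (hrc ((hmemS i (r i)).mp (hrS i))).symm
  -- exponents
  set base : ZMod d → ℤ := fun j => ((ψ j).val : ℤ) - ((j.val : ℕ) : ℤ) with hbase
  set s : ZMod d → ℤ := fun j => ∑ u ∈ S j, base u with hsdef
  set k : ZMod d → ℤ :=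
    fun j => base j + (if j = r j then ((d : ℤ) * (h j : ℤ) - s j) else 0) with hk
  set a : ZMod d → Fˣ := fun j => ω ^ k j with ha
  have hbasecast : ∀ j, ((base j : ZMod d)) = ψ j - j := by
    intro j
    rw [hbase]
    push_cast [ZMod.natCast_val, ZMod.cast_id]
    ring
  have hscast : ∀ j, ((s j : ZMod d)) = 0 := by
    intro j
    rw [hsdef]
    push_cast
    have : ∑ u ∈ S j, ((base u : ZMod d)) = ∑ u ∈ S j, (ψ u - u) :=
      Finset.sum_congr rfl fun u _ => hbasecast u
    rw [this, Finset.sum_sub_distrib]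
    have hψ : ∑ u ∈ S j, ψ u = ∑ u ∈ S j, u := by
      apply Finset.sum_nbij' (i := fun u => ψ u) (j := fun u => ψ⁻¹ u)
      · intro u hu
        rw [hmemS] at hu ⊢
        exact (Equiv.Perm.sameCycle_apply_right).mpr hu
      · intro u hu
        rw [hmemS] at hu ⊢
        exact (Equiv.Perm.sameCycle_apply_right (f := ψ)).mp (by simpa using hu)
      · intro u _; simp
      · intro u _; simp
      · intro u _; rfl
    rw [hψ, sub_self]
  have hkcast : ∀ j, ((k j : ZMod d)) = ψ j - j := by
    intro j
    rw [hk]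
    push_cast
    rw [hbasecast j]
    split
    · rw [hscast j, ZMod.natCast_self]; ring
    · ring
  -- sum of exponents along a cycle
  have hsum : ∀ i, ∑ j ∈ S i, k j = (d : ℤ) * (h i : ℤ) := by
    intro i
    rw [hk]
    rw [Finset.sum_add_distrib]
    have h1 : ∑ j ∈ S i, base j = s i := by rw [hsdef]
    have h2 : ∑ j ∈ S i, (if j = r j then ((d : ℤ) * (h j : ℤ) - s j) else 0)
        = (d : ℤ) * (h i : ℤ) - s i := by
      have hcond : ∀ j ∈ S i, (if j = r j then ((d : ℤ) * (h j : ℤ) - s j) else 0)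
          = (if j = r i then ((d : ℤ) * (h j : ℤ) - s j) else 0) := by
        intro j hj
        have hrij : r i = r j := hrc ((hmemS i j).mp hj)
        rw [hrij]
      rw [Finset.sum_congr rfl hcond, Finset.sum_ite_eq' (S i) (r i)
        (fun j => (d : ℤ) * (h j : ℤ) - s j), if_pos (hrS i)]
      have hci : ψ.SameCycle i (r i) := (hmemS i (r i)).mp (hrS i)
      have hsr : s (r i) = s i := by simp only [hsdef]; rw [hSeq hci]
      rw [← hconst i (r i) hci, hsr]
    rw [h1, h2]
    ring
  -- the map
  set L : F → ℤ := fun x =>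
    if hx : x = 0 then 0 else (Subgroup.mem_zpowers_iff.mp (hω (Units.mk0 x hx))).choose
    with hL
  set f : F → F := fun x => if x = 0 then 0 else ((a ((L x : ZMod d))) : F) * x with hf
  have hLspec : ∀ (x : F) (hx : x ≠ 0), ω ^ L x = Units.mk0 x hx := by
    intro x hx
    rw [hL]
    simp only [dif_neg hx]
    exact (Subgroup.mem_zpowers_iff.mp (hω (Units.mk0 x hx))).choose_spec
  have hLe : ∀ e : ℤ, ((L ((ω ^ e : Fˣ) : F) : ZMod d)) = (e : ZMod d) := by
    intro e
    have hx : ((ω ^ e : Fˣ) : F) ≠ 0 := Units.ne_zero _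
    have h1 : ω ^ L ((ω ^ e : Fˣ) : F) = ω ^ e := by
      rw [hLspec _ hx]; ext; simp
    rw [zpow_eq_zpow_iff_modEq, hord] at h1
    have h2 : (d : ℤ) ∣ (L ((ω ^ e : Fˣ) : F) - e) := by
      refine dvd_trans ?_ (Int.ModEq.dvd (Int.ModEq.symm h1))
      exact_mod_cast Int.natCast_dvd_natCast.mpr hdvd
    have := (ZMod.intCast_zmod_eq_zero_iff_dvd _ d).mpr h2
    rw [Int.cast_sub, sub_eq_zero] at this
    exact this
  have hfe : ∀ e : ℤ, f ((ω ^ e : Fˣ) : F) = ((a ((e : ZMod d))) : F) * ((ω ^ e : Fˣ) : F) := by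
    intro e
    rw [hf]
    simp only [if_neg (Units.ne_zero (ω ^ e)), hLe e]
  have hfc : ∀ e : ℤ, f ((ω ^ e : Fˣ) : F) = ((ω ^ (k ((e : ZMod d)) + e) : Fˣ) : F) := by
    intro e
    rw [hfe e, ha]
    push_cast [zpow_add]
    ring
  refine ⟨a, f, ?_, hfe, ?_, ?_, ?_⟩
  · rw [hf]; simp
  · -- bijective
    rw [Fintype.bijective_iff_surjective_and_card]
    refine ⟨?_, rfl⟩
    intro y
    rcases eq_or_ne y 0 with hy | hy
    · exact ⟨0, by rw [hf]; simp [hy]⟩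
    · obtain ⟨c, hc⟩ := Subgroup.mem_zpowers_iff.mp (hω (Units.mk0 y hy))
      set j : ZMod d := ψ⁻¹ ((c : ZMod d)) with hj
      set e : ℤ := c - k j with he
      have hej : ((e : ZMod d)) = j := by
        rw [he]
        push_cast
        rw [hkcast j]
        have : ψ j = ((c : ZMod d)) := by rw [hj]; simp
        rw [this]; ring
      refine ⟨((ω ^ e : Fˣ) : F), ?_⟩
      rw [hfc e, hej]
      have : k j + e = c := by rw [he]; ring
      rw [this, hc]
      rfl
  · intro e
    refine ⟨k ((e : ZMod d)) + e, hfc e, ?_⟩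
    push_cast
    rw [hkcast]
    ring
  · intro i
    have hprod : ∏ j ∈ Finset.univ.filter (fun j => ψ.SameCycle i j), a j
        = ω ^ ((d * h i : ℕ) : ℤ) := by
      have hfs : Finset.univ.filter (fun j => ψ.SameCycle i j) = S i := by rw [hS]
      rw [hfs]
      have : ∏ j ∈ S i, a j = ω ^ (∑ j ∈ S i, k j) := by
        rw [ha]
        induction (S i) using Finset.induction_on with
        | empty => simp
        | insert _ _ hx ih =>
            rename_i x t
            rw [Finset.prod_insert hx, Finset.sum_insert hx, ih]
            exact (zpow_add ω (k x) _).symm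
      rw [this, hsum i]
      norm_cast
    rw [hprod, zpow_natCast, orderOf_pow, hord, Nat.gcd_eq_right (hdiv i)]
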